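/- Let G be a 3-partite undirected graph with parts A = {a₁,…,aₙ}, B = {b₁,…,bₙ}, C = {c₁,…,cₙ} and edge set E (every edge of G joins vertices from two different parts). Construct a labeled digraph H over the alphabet {(, )} with vertex set A ∪ B ∪ C ∪ A' ∪ {u}, where A' = {a₁',…,aₙ'} and u are fresh, and with the following labeled edges: (u, a₁) and (a_i, a_{i+1}) for 1 ≤ i ≤ n−1, each labeled '('; (a_i, b_j) labeled '(' for every edge {a_i, b_j} ∈ E; (b_i, c_j) labeled ')' for every edge {b_i, c_j} ∈ E; (c_i, a_j') labeled ')' for every edge {c_i, a_j} ∈ E; and (a_{i+1}', a_i') for 1 ≤ i ≤ n−1, each labeled ')'. Then the vertex a₁' is Dyck-1-reachable from u in H if and only if G contains a triangle, i.e. there exist i, j, l such that {a_i, b_j}, {b_j, c_l}, {c_l, a_i} are all edges of G. -/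
import Mathlib


/-- The alphabet {(, )}. -/
inductive Paren where
  | op : Paren   -- '('
  | cl : Paren   -- ')'
deriving DecidableEq

/-- The Dyck-1 language: balanced strings over one pair of parentheses. -/
inductive Dyck1 : List Paren → Prop
  | nil : Dyck1 []
  | wrap {w : List Paren} : Dyck1 w → Dyck1 (Paren.op :: w ++ [Paren.cl])
  | concat {u v : List Paren} : Dyck1 u → Dyck1 v → Dyck1 (u ++ v)

/-- A labeled walk in a `σ`-labeled digraph given by the edge relation `E`. -/
inductive LWalk {V σ : Type*} (E : V → σ → V → Prop) : V → List σ → V → Prop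
  | nil (v : V) : LWalk E v [] v
  | cons {u v w : V} {c : σ} {l : List σ} :
      E u c v → LWalk E v l w → LWalk E u (c :: l) w

/-- Vertices of the constructed graph `H`:
the copies `A`, `B`, `C` of the parts, the fresh copies `A' = {a₁',…,aₙ'}`,
and the fresh vertex `u`. -/
inductive Vtx (n : ℕ) where
  | vA : Fin n → Vtx n
  | vB : Fin n → Vtx n
  | vC : Fin n → Vtx n
  | vA' : Fin n → Vtx n
  | vu : Vtx n

/-- The labeled edges of `H`, where the tripartite graph `G` is given by the relations
`EAB`, `EBC`, `ECA` describing its edges between the respective parts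
(vertices are 0-indexed, so `a₁` is `Vtx.vA ⟨0, _⟩`). -/
def triEdge {n : ℕ} (EAB EBC ECA : Fin n → Fin n → Prop) :
    Vtx n → Paren → Vtx n → Prop := fun x c y =>
  (c = Paren.op ∧
    ((∃ h : 0 < n, x = Vtx.vu ∧ y = Vtx.vA ⟨0, h⟩) ∨
     (∃ (i : ℕ) (h : i + 1 < n), x = Vtx.vA ⟨i, by omega⟩ ∧ y = Vtx.vA ⟨i + 1, h⟩) ∨
     (∃ i j : Fin n, EAB i j ∧ x = Vtx.vA i ∧ y = Vtx.vB j))) ∨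
  (c = Paren.cl ∧
    ((∃ i j : Fin n, EBC i j ∧ x = Vtx.vB i ∧ y = Vtx.vC j) ∨
     (∃ i j : Fin n, ECA i j ∧ x = Vtx.vC i ∧ y = Vtx.vA' j) ∨
     (∃ (i : ℕ) (h : i + 1 < n), x = Vtx.vA' ⟨i + 1, h⟩ ∧ y = Vtx.vA' ⟨i, by omega⟩)))

section Aux

variable {n : ℕ} {EAB EBC ECA : Fin n → Fin n → Prop}

local notation "E" => triEdge EAB EBC ECA

lemma LWalk.append {V σ : Type*} {R : V → σ → V → Prop} {u v x : V} {w1 w2 : List σ}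
    (h1 : LWalk R u w1 v) (h2 : LWalk R v w2 x) : LWalk R u (w1 ++ w2) x := by
  induction h1 with
  | nil => simpa using h2
  | cons e _ ih => exact LWalk.cons e (ih h2)

lemma dyck_count {w : List Paren} (h : Dyck1 w) :
    w.count Paren.op = w.count Paren.cl := by
  induction h with
  | nil => rfl
  | wrap _ ih => simp [List.count_append, List.count_cons, ih]
  | concat _ _ ih1 ih2 => simp [List.count_append, ih1, ih2]

lemma rep_snoc {α : Type*} (k : ℕ) (x : α) :
    List.replicate k x ++ [x] = x :: List.replicate k x := by
  rw [← List.replicate_succ', List.replicate_succ]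

lemma rep_shift {α : Type*} (k : ℕ) (x : α) (l : List α) :
    x :: (List.replicate k x ++ l) = List.replicate k x ++ x :: l := by
  induction k with
  | zero => simp
  | succ k ih => simp [List.replicate_succ, ih]

lemma dyck_balanced (k : ℕ) :
    Dyck1 (List.replicate k Paren.op ++ List.replicate k Paren.cl) := by
  induction k with
  | zero => exact Dyck1.nil
  | succ k ih =>
    have := Dyck1.wrap ih
    have heq : Paren.op :: (List.replicate k Paren.op ++ List.replicate k Paren.cl)
        ++ [Paren.cl] = List.replicate (k+1) Paren.op ++ List.replicate (k+1) Paren.cl := by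
      simp [List.replicate_succ, rep_snoc]
    rwa [heq] at this

/-- walk up the A chain -/
lemma walk_up (j k : ℕ) (h : j + k < n) :
    LWalk E (Vtx.vA ⟨j, by omega⟩) (List.replicate k Paren.op) (Vtx.vA ⟨j + k, h⟩) := by
  induction k generalizing j with
  | zero => exact LWalk.nil _
  | succ k ih =>
    have e : E (Vtx.vA ⟨j, by omega⟩) Paren.op (Vtx.vA ⟨j + 1, by omega⟩) :=
      Or.inl ⟨rfl, Or.inr (Or.inl ⟨j, by omega, rfl, rfl⟩)⟩
    have tail := ih (j + 1) (by omega)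
    have : LWalk E (Vtx.vA ⟨j, by omega⟩) (Paren.op :: List.replicate k Paren.op)
        (Vtx.vA ⟨j + 1 + k, by omega⟩) := LWalk.cons e tail
    simpa [List.replicate_succ, show j + 1 + k = j + (k + 1) by omega] using this

/-- walk down the A' chain -/
lemma walk_down (hn : 0 < n) (q : ℕ) (h : q < n) :
    LWalk E (Vtx.vA' ⟨q, h⟩) (List.replicate q Paren.cl) (Vtx.vA' ⟨0, hn⟩) := by
  induction q with
  | zero => exact LWalk.nil _
  | succ q ih =>
    have e : E (Vtx.vA' ⟨q + 1, h⟩) Paren.cl (Vtx.vA' ⟨q, by omega⟩) :=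
      Or.inr ⟨rfl, Or.inr (Or.inr ⟨q, h, rfl, rfl⟩)⟩
    exact LWalk.cons e (ih (by omega))

/-- characterization of walks from A' to a'₀: mandatory descent -/
lemma walk_from_A' (hn : 0 < n) : ∀ {v t : Vtx n} {w : List Paren},
    LWalk E v w t → t = Vtx.vA' ⟨0, hn⟩ → ∀ (q : ℕ) (hq : q < n), v = Vtx.vA' ⟨q, hq⟩ →
    w = List.replicate q Paren.cl := by
  intro v t w hw
  induction hw with
  | nil v =>
    intro ht q hq hv
    rw [ht] at hv
    have : (0 : ℕ) = q := by injection hv with h; exact ((Fin.mk.injEq ..).mp h)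
    subst this
    rfl
  | @cons u v w c l e _ ih =>
    intro ht q hq hv
    subst hv
    rcases e with ⟨rfl, h | h | h⟩ | ⟨rfl, h | h | h⟩
    · obtain ⟨_, h1, _⟩ := h; cases h1
    · obtain ⟨_, _, h1, _⟩ := h; cases h1
    · obtain ⟨_, _, _, h1, _⟩ := h; cases h1
    · obtain ⟨_, _, _, h1, _⟩ := h; cases h1
    · obtain ⟨_, _, _, h1, _⟩ := h; cases h1
    · obtain ⟨i, hi, h1, rfl⟩ := h
      injection h1 with h1
      have hqi : q = i + 1 := (Fin.mk.injEq ..).mp h1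
      subst hqi
      rw [ih ht i (by omega) rfl]
      rfl

/-- characterization of walks from C -/
lemma walk_from_C (hn : 0 < n) {v : Vtx n} {w : List Paren}
    (hw : LWalk E v w (Vtx.vA' ⟨0, hn⟩)) : ∀ (i : Fin n), v = Vtx.vC i →
    ∃ (q : ℕ) (hq : q < n), ECA i ⟨q, hq⟩ ∧
      w = Paren.cl :: List.replicate q Paren.cl := by
  cases hw with
  | nil => intro i hi; cases hi
  | @cons u v w c l e hrest =>
    intro i hi
    subst hi
    rcases e with ⟨rfl, h | h | h⟩ | ⟨rfl, h | h | h⟩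
    · obtain ⟨_, h1, _⟩ := h; cases h1
    · obtain ⟨_, _, h1, _⟩ := h; cases h1
    · obtain ⟨_, _, _, h1, _⟩ := h; cases h1
    · obtain ⟨_, _, _, h1, _⟩ := h; cases h1
    · obtain ⟨i', j, hE, h1, rfl⟩ := h
      injection h1 with h1; subst h1
      refine ⟨j.1, j.2, by simpa using hE, ?_⟩
      rw [walk_from_A' hn hrest rfl j.1 j.2 (by simp)]
    · obtain ⟨_, _, h1, _⟩ := h; cases h1

/-- characterization of walks from B -/
lemma walk_from_B (hn : 0 < n) {v : Vtx n} {w : List Paren}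
    (hw : LWalk E v w (Vtx.vA' ⟨0, hn⟩)) : ∀ (j : Fin n), v = Vtx.vB j →
    ∃ (l : Fin n) (q : ℕ) (hq : q < n), EBC j l ∧ ECA l ⟨q, hq⟩ ∧
      w = Paren.cl :: Paren.cl :: List.replicate q Paren.cl := by
  cases hw with
  | nil => intro j hj; cases hj
  | @cons u v w c l e hrest =>
    intro j hj
    subst hj
    rcases e with ⟨rfl, h | h | h⟩ | ⟨rfl, h | h | h⟩
    · obtain ⟨_, h1, _⟩ := h; cases h1
    · obtain ⟨_, _, h1, _⟩ := h; cases h1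
    · obtain ⟨_, _, _, h1, _⟩ := h; cases h1
    · obtain ⟨j', l', hE, h1, rfl⟩ := h
      injection h1 with h1; subst h1
      obtain ⟨q, hq, hECA, rfl⟩ := walk_from_C hn hrest l' rfl
      exact ⟨l', q, hq, hE, hECA, rfl⟩
    · obtain ⟨_, _, _, h1, _⟩ := h; cases h1
    · obtain ⟨_, _, h1, _⟩ := h; cases h1

/-- characterization of walks from A -/
lemma walk_from_A (hn : 0 < n) : ∀ {v t : Vtx n} {w : List Paren},
    LWalk E v w t → t = Vtx.vA' ⟨0, hn⟩ → ∀ (p : ℕ) (hp : p < n), v = Vtx.vA ⟨p, hp⟩ →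
    ∃ (k : ℕ) (hk : p + k < n) (j : Fin n) (l : Fin n) (q : ℕ) (hq : q < n),
      EAB ⟨p + k, hk⟩ j ∧ EBC j l ∧ ECA l ⟨q, hq⟩ ∧
      w = List.replicate (k + 1) Paren.op ++
          (Paren.cl :: Paren.cl :: List.replicate q Paren.cl) := by
  intro v t w hw
  induction hw with
  | nil v => intro ht p hp hv; rw [ht] at hv; cases hv
  | @cons u v w c l e hrest ih =>
    intro ht p hp hv
    subst ht
    subst hv
    rcases e with ⟨rfl, h | h | h⟩ | ⟨rfl, h | h | h⟩
    · obtain ⟨_, h1, _⟩ := h; cases h1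
    · -- step up the chain
      obtain ⟨i, hi, h1, rfl⟩ := h
      injection h1 with h1
      have hpi : p = i := (Fin.mk.injEq ..).mp h1
      subst hpi
      obtain ⟨k, hk, j, l', q, hq, hEAB, hEBC, hECA, rfl⟩ := ih rfl (p + 1) hi rfl
      refine ⟨k + 1, by omega, j, l', q, hq, ?_, hEBC, hECA, ?_⟩
      · convert hEAB using 2; omega
      · simp [List.replicate_succ]
    · -- step to B
      obtain ⟨i, j, hE, h1, rfl⟩ := h
      injection h1 with h1
      subst h1
      obtain ⟨l', q, hq, hEBC, hECA, rfl⟩ := walk_from_B hn hrest j rfl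
      exact ⟨0, by omega, j, l', q, hq, by simpa using hE, hEBC, hECA, by simp⟩
    · obtain ⟨_, _, _, h1, _⟩ := h; cases h1
    · obtain ⟨_, _, _, h1, _⟩ := h; cases h1
    · obtain ⟨_, _, h1, _⟩ := h; cases h1

end Aux

/-- The vertex `a₁'` is Dyck-1-reachable from `u` in `H` iff `G` has a triangle. -/
theorem stmt5 {n : ℕ} (hn : 0 < n) (EAB EBC ECA : Fin n → Fin n → Prop) :
    (∃ w : List Paren, Dyck1 w ∧
        LWalk (triEdge EAB EBC ECA) Vtx.vu w (Vtx.vA' ⟨0, hn⟩)) ↔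
      ∃ i j l : Fin n, EAB i j ∧ EBC j l ∧ ECA l i := by
  constructor
  · rintro ⟨w, hd, hw⟩
    cases hw with
    | cons e hrest =>
      rcases e with ⟨rfl, h | h | h⟩ | ⟨rfl, h | h | h⟩
      · obtain ⟨h0, -, rfl⟩ := h
        obtain ⟨k, hk, j, l', q, hq, hEAB, hEBC, hECA, rfl⟩ :=
          walk_from_A hn hrest rfl 0 h0 rfl
        -- count parentheses
        have hc := dyck_count hd
        simp [List.count_append, List.count_cons, List.count_replicate] at hc
        have hkq : k = q := by omega
        subst hkq
        exact ⟨⟨k, hq⟩, j, l', by simpa using hEAB, hEBC, hECA⟩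
      · obtain ⟨_, _, h1, _⟩ := h; cases h1
      · obtain ⟨_, _, _, h1, _⟩ := h; cases h1
      · obtain ⟨_, _, _, h1, _⟩ := h; cases h1
      · obtain ⟨_, _, _, h1, _⟩ := h; cases h1
      · obtain ⟨_, _, h1, _⟩ := h; cases h1
  · rintro ⟨i, j, l, hAB, hBC, hCA⟩
    refine ⟨List.replicate (i.1 + 2) Paren.op ++ List.replicate (i.1 + 2) Paren.cl,
      dyck_balanced _, ?_⟩
    have e0 : triEdge EAB EBC ECA Vtx.vu Paren.op (Vtx.vA ⟨0, hn⟩) :=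
      Or.inl ⟨rfl, Or.inl ⟨hn, rfl, rfl⟩⟩
    have w1 : LWalk (triEdge EAB EBC ECA) (Vtx.vA ⟨0, hn⟩)
        (List.replicate i.1 Paren.op) (Vtx.vA i) := by
      have := walk_up (EAB := EAB) (EBC := EBC) (ECA := ECA) 0 i.1 (by simp)
      simpa using this
    have e1 : triEdge EAB EBC ECA (Vtx.vA i) Paren.op (Vtx.vB j) :=
      Or.inl ⟨rfl, Or.inr (Or.inr ⟨i, j, hAB, rfl, rfl⟩)⟩
    have e2 : triEdge EAB EBC ECA (Vtx.vB j) Paren.cl (Vtx.vC l) :=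
      Or.inr ⟨rfl, Or.inl ⟨j, l, hBC, rfl, rfl⟩⟩
    have e3 : triEdge EAB EBC ECA (Vtx.vC l) Paren.cl (Vtx.vA' i) :=
      Or.inr ⟨rfl, Or.inr (Or.inl ⟨l, i, hCA, rfl, rfl⟩)⟩
    have w2 : LWalk (triEdge EAB EBC ECA) (Vtx.vA' i)
        (List.replicate i.1 Paren.cl) (Vtx.vA' ⟨0, hn⟩) := by
      have := walk_down (EAB := EAB) (EBC := EBC) (ECA := ECA) hn i.1 i.2
      simpa using this
    have wtail : LWalk (triEdge EAB EBC ECA) (Vtx.vB j)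
        (Paren.cl :: Paren.cl :: List.replicate i.1 Paren.cl) (Vtx.vA' ⟨0, hn⟩) :=
      LWalk.cons e2 (LWalk.cons e3 w2)
    have whole : LWalk (triEdge EAB EBC ECA) Vtx.vu
        (Paren.op :: (List.replicate i.1 Paren.op ++
          (Paren.op :: (Paren.cl :: Paren.cl :: List.replicate i.1 Paren.cl))))
        (Vtx.vA' ⟨0, hn⟩) :=
      LWalk.cons e0 (w1.append (LWalk.cons e1 wtail))
    have heq : List.replicate (i.1 + 2) Paren.op ++ List.replicate (i.1 + 2) Paren.cl
        = Paren.op :: (List.replicate i.1 Paren.op ++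
          (Paren.op :: (Paren.cl :: Paren.cl :: List.replicate i.1 Paren.cl))) := by
      simp [List.replicate_succ, rep_shift]
    rwa [heq]
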